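/- arXiv:1809.09219 — 3 statements merged into one kernel-verified Lean document; each statement's English description precedes it below -/
import Mathlib

section
/- Suppose x̄, x̂ ∈ ℝ^N satisfy ‖x̄‖₂ = 1, ‖x̂‖₂ ≤ 1, and for constants γ, λ, p, ν > 0 the inequality (γλ/p)(1 − x̄ᵀx̂) ≤ ν‖x̄‖₁ − ν‖x̂‖₁ + (ν/2)‖x̄ − x̂‖₁ holds. Then ‖x̄ − x̂‖₂ ≤ (3pν/(γλ))·√(‖x̄‖₀). -/
open Finset

/-- Deterministic core of Theorem 1 for the ℓ1 penalty:
if `‖x̄‖₂ = 1`, `‖x̂‖₂ ≤ 1` and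
`(γλ/p)(1 − x̄ᵀx̂) ≤ ν‖x̄‖₁ − ν‖x̂‖₁ + (ν/2)‖x̄ − x̂‖₁`, then
`‖x̄ − x̂‖₂ ≤ (3pν/(γλ))√(‖x̄‖₀)`. -/
theorem error_bound_l1 {N : ℕ} (xbar xhat : Fin N → ℝ) (γ lam p ν : ℝ)
    (hγ : 0 < γ) (hlam : 0 < lam) (hp : 0 < p) (hν : 0 < ν)
    (hxbar : Real.sqrt (∑ i, (xbar i) ^ 2) = 1)
    (hxhat : Real.sqrt (∑ i, (xhat i) ^ 2) ≤ 1)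
    (h : (γ * lam / p) * (1 - ∑ i, xbar i * xhat i)
        ≤ ν * ∑ i, |xbar i| - ν * ∑ i, |xhat i| + (ν / 2) * ∑ i, |xbar i - xhat i|) :
    Real.sqrt (∑ i, (xbar i - xhat i) ^ 2)
      ≤ (3 * p * ν / (γ * lam)) * Real.sqrt ((univ.filter fun i => xbar i ≠ 0).card) := by
  set S : Finset (Fin N) := univ.filter fun i => xbar i ≠ 0 with hS
  set d : ℝ := Real.sqrt (∑ i, (xbar i - xhat i) ^ 2) with hd
  set s : ℝ := Real.sqrt (S.card : ℝ) with hs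
  have hd0 : 0 ≤ d := Real.sqrt_nonneg _
  have hs0 : 0 ≤ s := Real.sqrt_nonneg _
  have hsumnn : (0:ℝ) ≤ ∑ i, (xbar i - xhat i) ^ 2 :=
    Finset.sum_nonneg fun i _ => sq_nonneg _
  have hd2 : d ^ 2 = ∑ i, (xbar i - xhat i) ^ 2 := Real.sq_sqrt hsumnn
  -- norms
  have hxbar2 : ∑ i, (xbar i) ^ 2 = 1 := by
    have := congrArg (· ^ 2) hxbar
    simpa [Real.sq_sqrt (Finset.sum_nonneg fun i _ => sq_nonneg (xbar i))] using this
  have hxhat2 : ∑ i, (xhat i) ^ 2 ≤ 1 := by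
    have hnn : (0:ℝ) ≤ ∑ i, (xhat i) ^ 2 := Finset.sum_nonneg fun i _ => sq_nonneg _
    nlinarith [Real.sq_sqrt hnn, Real.sqrt_nonneg (∑ i, (xhat i) ^ 2)]
  -- Step A: d^2 ≤ 2 (1 - ⟨x̄, x̂⟩)
  have hA : d ^ 2 ≤ 2 * (1 - ∑ i, xbar i * xhat i) := by
    have hexp : ∑ i, (xbar i - xhat i) ^ 2
        = (∑ i, (xbar i) ^ 2) + (∑ i, (xhat i) ^ 2) - 2 * ∑ i, xbar i * xhat i := by
      rw [← Finset.sum_add_distrib, Finset.mul_sum, ← Finset.sum_sub_distrib]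
      apply Finset.sum_congr rfl
      intro i _; ring
    rw [hd2, hexp, hxbar2]; linarith
  -- Step B: RHS of h ≤ (3ν/2) s d
  have hCS : ∑ i ∈ S, |xbar i - xhat i| ≤ s * d := by
    have h1 : (∑ i ∈ S, |xbar i - xhat i|) ^ 2
        ≤ (S.card : ℝ) * ∑ i ∈ S, |xbar i - xhat i| ^ 2 := by
      have := sq_sum_le_card_mul_sum_sq (α := ℝ) (s := S) (f := fun i => |xbar i - xhat i|)
      exact_mod_cast this
    have h2 : ∑ i ∈ S, |xbar i - xhat i| ^ 2 ≤ ∑ i, (xbar i - xhat i) ^ 2 := by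
      have : ∀ i ∈ S, |xbar i - xhat i| ^ 2 = (xbar i - xhat i) ^ 2 := fun i _ => sq_abs _
      rw [Finset.sum_congr rfl this]
      exact Finset.sum_le_sum_of_subset_of_nonneg (Finset.subset_univ S)
        (fun i _ _ => sq_nonneg _)
    have hnn : 0 ≤ ∑ i ∈ S, |xbar i - xhat i| :=
      Finset.sum_nonneg fun i _ => abs_nonneg _
    have hsd : (s * d) ^ 2 = (S.card : ℝ) * ∑ i, (xbar i - xhat i) ^ 2 := by
      rw [mul_pow, hd2, hs, Real.sq_sqrt (by positivity : (0:ℝ) ≤ (S.card:ℝ))]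
    have h3 : (↑(#S) : ℝ) * ∑ i ∈ S, |xbar i - xhat i| ^ 2 ≤ (s * d) ^ 2 := by
      rw [hsd]
      exact mul_le_mul_of_nonneg_left h2 (by positivity)
    have h4 : (∑ i ∈ S, |xbar i - xhat i|) ^ 2 ≤ (s * d) ^ 2 := le_trans h1 h3
    exact (pow_le_pow_iff_left₀ hnn (mul_nonneg hs0 hd0) two_ne_zero).mp h4
  have hB : ν * ∑ i, |xbar i| - ν * ∑ i, |xhat i| + (ν / 2) * ∑ i, |xbar i - xhat i|
      ≤ (3 * ν / 2) * (s * d) := by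
    have key : ∑ i, |xbar i| - ∑ i, |xhat i| + (1 / 2) * ∑ i, |xbar i - xhat i|
        ≤ (3 / 2) * ∑ i ∈ S, |xbar i - xhat i| := by
      have hsplit : ∀ (f : Fin N → ℝ), ∑ i, f i = ∑ i ∈ S, f i + ∑ i ∈ Sᶜ, f i := by
        intro f; rw [Finset.sum_add_sum_compl]
      rw [hsplit (fun i => |xbar i|), hsplit (fun i => |xhat i|),
        hsplit (fun i => |xbar i - xhat i|)]
      have hzero : ∀ i ∈ Sᶜ, xbar i = 0 := by
        intro i hi
        simpa [hS] using hi
      have e1 : ∑ i ∈ Sᶜ, |xbar i| = 0 :=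
        Finset.sum_eq_zero fun i hi => by rw [hzero i hi, abs_zero]
      have e2 : ∑ i ∈ Sᶜ, |xbar i - xhat i| = ∑ i ∈ Sᶜ, |xhat i| :=
        Finset.sum_congr rfl fun i hi => by rw [hzero i hi, zero_sub, abs_neg]
      have e3 : ∑ i ∈ S, |xbar i| - ∑ i ∈ S, |xhat i| ≤ ∑ i ∈ S, |xbar i - xhat i| := by
        rw [← Finset.sum_sub_distrib]
        exact Finset.sum_le_sum fun i _ => abs_sub_abs_le_abs_sub _ _
      have e4 : 0 ≤ ∑ i ∈ Sᶜ, |xhat i| := Finset.sum_nonneg fun i _ => abs_nonneg _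
      rw [e1, e2]
      linarith
    nlinarith [hν.le]
  -- combine
  have hchain : (γ * lam / p) * (d ^ 2 / 2) ≤ (3 * ν / 2) * (s * d) := by
    have h0 : 0 < γ * lam / p := by positivity
    calc (γ * lam / p) * (d ^ 2 / 2) ≤ (γ * lam / p) * (1 - ∑ i, xbar i * xhat i) := by
          apply mul_le_mul_of_nonneg_left _ h0.le; linarith
      _ ≤ _ := le_trans h hB
  rcases eq_or_lt_of_le hd0 with hdz | hdz
  · rw [← hdz]; positivity
  · have hkey : (γ * lam / p) * d ≤ 3 * ν * s := by nlinarith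
    have hkey' : γ * lam * d ≤ 3 * ν * s * p := by
      rw [div_mul_eq_mul_div, div_le_iff₀ hp] at hkey; linarith
    have hgl : 0 < γ * lam := by positivity
    rw [div_mul_eq_mul_div, le_div_iff₀ hgl]
    linarith
end

section
/- Suppose x̄, x̂ ∈ ℝ^N satisfy ‖x̄‖₂ = 1, ‖x̂‖₂ ≤ 1, ‖x̄ − x̂‖_∞ ≤ 2 componentwise (which follows from the norm bounds), and for constants γ, λ, p, ν > 0, (γλ/p)(1 − x̄ᵀx̂) ≤ ν‖x̄‖₀ − ν‖x̂‖₀ + (ν/2)‖x̄ − x̂‖₁. If additionally (ν/2)‖x̄ − x̂‖₁ ≤ ν‖x̄ − x̂‖₀, then ‖x̄ − x̂‖₂ ≤ √(4pν‖x̄‖₀/(γλ)). -/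
open Finset

/-- Deterministic core of Theorem 1 for the ℓ0 penalty:
if `‖x̄‖₂ = 1`, `‖x̂‖₂ ≤ 1`, `|x̄ᵢ − x̂ᵢ| ≤ 2` componentwise,
`(γλ/p)(1 − x̄ᵀx̂) ≤ ν‖x̄‖₀ − ν‖x̂‖₀ + (ν/2)‖x̄ − x̂‖₁`, and
`(ν/2)‖x̄ − x̂‖₁ ≤ ν‖x̄ − x̂‖₀`, then `‖x̄ − x̂‖₂ ≤ √(4pν‖x̄‖₀/(γλ))`. -/
theorem error_bound_l0 {N : ℕ} (xbar xhat : Fin N → ℝ) (γ lam p ν : ℝ)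
    (hγ : 0 < γ) (hlam : 0 < lam) (hp : 0 < p) (hν : 0 < ν)
    (hxbar : Real.sqrt (∑ i, (xbar i) ^ 2) = 1)
    (hxhat : Real.sqrt (∑ i, (xhat i) ^ 2) ≤ 1)
    (hcomp : ∀ i, |xbar i - xhat i| ≤ 2)
    (h : (γ * lam / p) * (1 - ∑ i, xbar i * xhat i)
        ≤ ν * (univ.filter fun i => xbar i ≠ 0).card
          - ν * (univ.filter fun i => xhat i ≠ 0).card
          + (ν / 2) * ∑ i, |xbar i - xhat i|)
    (hl1l0 : (ν / 2) * ∑ i, |xbar i - xhat i|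
        ≤ ν * (univ.filter fun i => xbar i - xhat i ≠ 0).card) :
    Real.sqrt (∑ i, (xbar i - xhat i) ^ 2)
      ≤ Real.sqrt (4 * p * ν * (univ.filter fun i => xbar i ≠ 0).card / (γ * lam)) := by
  have hbar2 : ∑ i, (xbar i) ^ 2 = 1 := by
    have hnn : (0:ℝ) ≤ ∑ i, (xbar i) ^ 2 := Finset.sum_nonneg fun i _ => sq_nonneg _
    have := Real.sq_sqrt hnn
    rw [hxbar] at this; linarith
  have hhat2 : ∑ i, (xhat i) ^ 2 ≤ 1 := by
    have hnn : (0:ℝ) ≤ ∑ i, (xhat i) ^ 2 := Finset.sum_nonneg fun i _ => sq_nonneg _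
    have h1 := Real.sq_sqrt hnn
    nlinarith [Real.sqrt_nonneg (∑ i, (xhat i) ^ 2)]
  have hexp : ∑ i, (xbar i - xhat i) ^ 2
      = ∑ i, (xbar i) ^ 2 - 2 * ∑ i, xbar i * xhat i + ∑ i, (xhat i) ^ 2 := by
    rw [Finset.mul_sum, ← Finset.sum_sub_distrib, ← Finset.sum_add_distrib]
    exact Finset.sum_congr rfl fun i _ => by ring
  -- card inequality
  have hsub : (univ.filter fun i => xbar i - xhat i ≠ 0)
      ⊆ (univ.filter fun i => xbar i ≠ 0) ∪ (univ.filter fun i => xhat i ≠ 0) := by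
    intro i hi
    simp only [Finset.mem_filter, Finset.mem_union, Finset.mem_univ, true_and] at *
    by_contra hc
    push_neg at hc
    exact hi (by rw [hc.1, hc.2, sub_zero])
  have hcard : ((univ.filter fun i => xbar i - xhat i ≠ 0).card : ℝ)
      ≤ (univ.filter fun i => xbar i ≠ 0).card + (univ.filter fun i => xhat i ≠ 0).card := by
    have := (Finset.card_le_card hsub).trans (Finset.card_union_le _ _)
    exact_mod_cast this
  -- combine
  set A : ℝ := ((univ.filter fun i => xbar i ≠ 0).card : ℝ)
  have hAnn : 0 ≤ A := Nat.cast_nonneg _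
  have hkey : (γ * lam / p) * (1 - ∑ i, xbar i * xhat i) ≤ 2 * ν * A := by
    calc (γ * lam / p) * (1 - ∑ i, xbar i * xhat i)
        ≤ ν * A - ν * (univ.filter fun i => xhat i ≠ 0).card
          + ν * (univ.filter fun i => xbar i - xhat i ≠ 0).card := by linarith
      _ ≤ 2 * ν * A := by nlinarith
  have hq : 0 < γ * lam / p := div_pos (mul_pos hγ hlam) hp
  have hS : ∑ i, (xbar i - xhat i) ^ 2 ≤ 4 * p * ν * A / (γ * lam) := by
    have h1 : 1 - ∑ i, xbar i * xhat i ≤ 2 * ν * A / (γ * lam / p) :=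
      (le_div_iff₀ hq).2 (by linarith [hkey])
    have h2 : 2 * ν * A / (γ * lam / p) = 2 * p * ν * A / (γ * lam) := by
      field_simp
    rw [hexp, hbar2]
    have h3 : 1 - 2 * ∑ i, xbar i * xhat i + ∑ i, (xhat i)^2 ≤ 2 * (1 - ∑ i, xbar i * xhat i) := by
      linarith
    have h4 : 2 * (2 * p * ν * A / (γ * lam)) = 4 * p * ν * A / (γ * lam) := by ring
    linarith [h1, h2 ▸ h1]
  exact Real.sqrt_le_sqrt hS
end

section
/- For ν > 0, ρ > 0, b ∈ ℝ with the MCP penalty g_{ν,b'}(t) (with parameter b' > 1/ρ), the minimizer of t ↦ g_{ν,b'}(t) − b t + (ρ/2)t² over ℝ is: t* = 0 if |b| ≤ ν; t* = sign(b)(|b| − ν)/(ρ − 1/b') if ν < |b| ≤ b'νρ; and t* = b/ρ if |b| > b'νρ, where g_{ν,b'}(t) = ν|t| − t²/(2b') for |t| ≤ b'ν and g_{ν,b'}(t) = b'ν²/2 for |t| > b'ν. -/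
set_option maxHeartbeats 1000000

lemma mcp_aux (ν ρ b b' : ℝ) (hν : 0 < ν) (hρ : 0 < ρ) (hb' : 1 / ρ < b') (hb : 0 ≤ b)
    (tstar : ℝ)
    (ht : tstar = if b ≤ ν then 0 else if b ≤ b' * ν * ρ then (b - ν) / (ρ - 1 / b') else b / ρ)
    (t : ℝ) :
    ((if |tstar| ≤ b' * ν then ν * |tstar| - tstar ^ 2 / (2 * b') else b' * ν ^ 2 / 2)
        - b * tstar + ρ / 2 * tstar ^ 2)
      ≤ ((if |t| ≤ b' * ν then ν * |t| - t ^ 2 / (2 * b') else b' * ν ^ 2 / 2)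
        - b * t + ρ / 2 * t ^ 2) := by
  have hb'0 : 0 < b' := lt_trans (by positivity) hb'
  have hib : b' * (1 / b') = 1 := mul_one_div_cancel hb'0.ne'
  have hρb : 1 < ρ * b' := by rw [div_lt_iff₀ hρ] at hb'; linarith
  have hα : 0 < ρ - 1 / b' := by
    have : 1 / b' < ρ := by rw [div_lt_iff₀ hb'0]; linarith
    linarith
  have hts : t ≤ |t| := le_abs_self t
  have hbt : b * t ≤ b * |t| := mul_le_mul_of_nonneg_left hts hb
  have habs : |t| ^ 2 = t ^ 2 := sq_abs t
  have hs0 : 0 ≤ |t| := abs_nonneg t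
  have hsq : ∀ x : ℝ, -(b ^ 2 / (2 * ρ)) ≤ ρ / 2 * x ^ 2 - b * x := by
    intro x
    have e : ρ / 2 * x ^ 2 - b * x = (ρ * x - b) ^ 2 / (2 * ρ) - b ^ 2 / (2 * ρ) := by
      field_simp; ring
    have h2 := div_nonneg (sq_nonneg (ρ * x - b)) (by positivity : (0:ℝ) ≤ 2 * ρ)
    linarith
  by_cases hA : b ≤ ν
  · -- tstar = 0
    rw [ht, if_pos hA]
    have h0 : |(0:ℝ)| ≤ b' * ν := by simp; positivity
    rw [if_pos h0]
    simp only [abs_zero]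
    norm_num
    by_cases hT : |t| ≤ b' * ν
    · rw [if_pos hT]
      have hP : 0 ≤ 2 * b' * ν * |t| - t ^ 2 + ρ * b' * t ^ 2 - 2 * b' * (b * t) := by
        nlinarith [mul_nonneg hb'0.le (by linarith : 0 ≤ b * |t| - b * t),
          mul_nonneg (mul_nonneg hb'0.le (by linarith : (0:ℝ) ≤ ν - b)) hs0,
          mul_nonneg (by linarith : (0:ℝ) ≤ ρ * b' - 1) (sq_nonneg t)]
      have hPd := div_nonneg hP (by positivity : (0:ℝ) ≤ 2 * b')
      have e : (2 * b' * ν * |t| - t ^ 2 + ρ * b' * t ^ 2 - 2 * b' * (b * t)) / (2 * b')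
          = ν * |t| - t ^ 2 / (2 * b') - b * t + ρ / 2 * t ^ 2 := by
        field_simp; ring
      linarith [hPd, e]
    · rw [if_neg hT]
      push_neg at hT
      have habsρ2 : ρ ^ 2 * |t| ^ 2 = ρ ^ 2 * t ^ 2 := by rw [habs]
      have hP : 0 ≤ ρ * b' * ν ^ 2 - 2 * ρ * (b * t) + ρ ^ 2 * t ^ 2 := by
        nlinarith [mul_nonneg hρ.le (by linarith : 0 ≤ b * |t| - b * t),
          mul_nonneg (mul_nonneg hρ.le (by linarith : (0:ℝ) ≤ ν - b)) hs0,
          sq_nonneg (ρ * |t| - ν), mul_nonneg (by linarith : (0:ℝ) ≤ ρ * b' - 1) (sq_nonneg ν),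
          habsρ2]
      have hPd := div_nonneg hP (by positivity : (0:ℝ) ≤ 2 * ρ)
      have e : (ρ * b' * ν ^ 2 - 2 * ρ * (b * t) + ρ ^ 2 * t ^ 2) / (2 * ρ)
          = b' * ν ^ 2 / 2 - b * t + ρ / 2 * t ^ 2 := by
        field_simp
      linarith [hPd, e]
  · push_neg at hA
    by_cases hB : b ≤ b' * ν * ρ
    · -- tstar = c
      rw [ht, if_neg (not_le.2 hA), if_pos hB]
      obtain ⟨c, hcdef⟩ : ∃ c : ℝ, (b - ν) / (ρ - 1 / b') = c := ⟨_, rfl⟩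
      rw [hcdef]
      have hαc : (ρ - 1 / b') * c = b - ν := by
        rw [← hcdef, mul_div_cancel₀ _ hα.ne']
      have hb'c : (ρ * b' - 1) * c = b' * (b - ν) := by
        linear_combination b' * hαc + c * hib
      have hc0 : 0 ≤ c := by rw [← hcdef]; exact div_nonneg (by linarith) hα.le
      have hibν : b' * ν * (1 / b') = ν := by field_simp
      have hcb : c ≤ b' * ν := by
        rw [← hcdef, div_le_iff₀ hα]
        nlinarith [hibν, hB]
      rw [if_pos (by rwa [abs_of_nonneg hc0]), abs_of_nonneg hc0]
      by_cases hT : |t| ≤ b' * ν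
      · rw [if_pos hT]
        have hb'cs : (ρ * b' - 1) * c * |t| = b' * (b - ν) * |t| := by rw [hb'c]
        have hb'cc : (ρ * b' - 1) * c ^ 2 = b' * (b - ν) * c := by
          linear_combination c * hb'c
        have habsK : ρ * b' * |t| ^ 2 = ρ * b' * t ^ 2 := by rw [habs]
        have hP : 0 ≤ 2 * b' * ν * |t| - t ^ 2 + ρ * b' * t ^ 2 - 2 * b' * (b * t)
            - (2 * b' * ν * c - c ^ 2 + ρ * b' * c ^ 2 - 2 * b' * (b * c)) := by
          nlinarith [mul_nonneg (by linarith : (0:ℝ) ≤ ρ * b' - 1) (sq_nonneg (|t| - c)),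
            hb'cs, hb'cc, mul_nonneg hb'0.le (by linarith : 0 ≤ b * |t| - b * t), habs, habsK]
        have hPd := div_nonneg hP (by positivity : (0:ℝ) ≤ 2 * b')
        have e : (2 * b' * ν * |t| - t ^ 2 + ρ * b' * t ^ 2 - 2 * b' * (b * t)
              - (2 * b' * ν * c - c ^ 2 + ρ * b' * c ^ 2 - 2 * b' * (b * c))) / (2 * b')
            = (ν * |t| - t ^ 2 / (2 * b') - b * t + ρ / 2 * t ^ 2)
              - (ν * c - c ^ 2 / (2 * b') - b * c + ρ / 2 * c ^ 2) := by
          field_simp; ring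
        linarith [hPd, e]
      · rw [if_neg hT]
        push_neg at hT
        have hval : (b - ν) * c * (ρ * b' - 1) = b' * (b - ν) ^ 2 := by
          linear_combination (b - ν) * hb'c
        have eL : ν * c - c ^ 2 / (2 * b') - b * c + ρ / 2 * c ^ 2 = -((b - ν) * c / 2) := by
          have e2 : ν * c - c ^ 2 / (2 * b') - b * c + ρ / 2 * c ^ 2
              = -((ρ - 1 / b') / 2 * c ^ 2) := by linear_combination c * hαc
          rw [e2]; linear_combination (-(c/2)) * hαc
        rw [eL]
        have hprod : 0 ≤ ρ * t ^ 2 - 2 * b * |t| - ρ * (b' * ν) ^ 2 + 2 * b * (b' * ν) := by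
          have hin : 0 ≤ ρ * (|t| + b' * ν) - 2 * b := by
            nlinarith [mul_nonneg hρ.le (by linarith : 0 ≤ |t| - b' * ν)]
          nlinarith [mul_nonneg (by linarith : (0:ℝ) ≤ |t| - b' * ν) hin, habs,
            (by rw [habs] : ρ * |t| ^ 2 = ρ * t ^ 2)]
        nlinarith [hval, hprod, mul_nonneg hb'0.le (sq_nonneg (ρ * b' * ν - b)),
          (show (0:ℝ) < ρ * b' - 1 by linarith),
          mul_nonneg (by linarith : (0:ℝ) ≤ ρ * b' - 1) (by linarith : 0 ≤ b * |t| - b * t)]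
    · -- tstar = b/ρ
      push_neg at hB
      rw [ht, if_neg (not_le.2 hA), if_neg (not_le.2 hB)]
      have hbρ : b' * ν < b / ρ := by rw [lt_div_iff₀ hρ]; linarith
      have hb0 : 0 ≤ b / ρ := by positivity
      rw [if_neg (by rw [abs_of_nonneg hb0]; exact not_le.2 hbρ)]
      have hL : b' * ν ^ 2 / 2 - b * (b / ρ) + ρ / 2 * (b / ρ) ^ 2
          = b' * ν ^ 2 / 2 - b ^ 2 / (2 * ρ) := by field_simp; ring
      rw [hL]
      by_cases hT : |t| ≤ b' * ν
      · rw [if_pos hT]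
        have habsK : (ρ * b' - 1) * |t| ^ 2 = (ρ * b' - 1) * t ^ 2 := by rw [habs]
        have hin : 0 ≤ 2 * b' * (b - ν) - (ρ * b' - 1) * (|t| + b' * ν) := by
          nlinarith [mul_nonneg (by linarith : (0:ℝ) ≤ ρ * b' - 1)
              (by linarith : 0 ≤ b' * ν - |t|),
            mul_nonneg hb'0.le (by linarith : 0 ≤ b - b' * ν * ρ)]
        have hmono : (ρ * b' - 1) * (b' * ν) ^ 2 - 2 * b' * (b - ν) * (b' * ν)
            ≤ (ρ * b' - 1) * t ^ 2 - 2 * b' * (b - ν) * |t| := by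
          nlinarith [mul_nonneg (by linarith : 0 ≤ b' * ν - |t|) hin, habsK]
        have hP : 0 ≤ 2 * ρ * b' * ν * |t| - ρ * t ^ 2 - 2 * ρ * b' * (b * t)
            + ρ ^ 2 * b' * t ^ 2 - ρ * b' ^ 2 * ν ^ 2 + b' * b ^ 2 := by
          nlinarith [mul_le_mul_of_nonneg_left hmono hρ.le,
            mul_nonneg hb'0.le (sq_nonneg (ρ * b' * ν - b)),
            mul_nonneg (mul_nonneg hρ.le hb'0.le) (by linarith : 0 ≤ b * |t| - b * t)]
        have hPd := div_nonneg hP (by positivity : (0:ℝ) ≤ 2 * ρ * b')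
        have e : (2 * ρ * b' * ν * |t| - ρ * t ^ 2 - 2 * ρ * b' * (b * t)
              + ρ ^ 2 * b' * t ^ 2 - ρ * b' ^ 2 * ν ^ 2 + b' * b ^ 2) / (2 * ρ * b')
            = (ν * |t| - t ^ 2 / (2 * b') - b * t + ρ / 2 * t ^ 2)
              - (b' * ν ^ 2 / 2 - b ^ 2 / (2 * ρ)) := by
          field_simp; ring
        linarith [hPd, e]
      · rw [if_neg hT]
        linarith [hsq t]



/-- The scalar z-subproblem with the minimax concave penalty (firm thresholding):
for `b' > 1/ρ`, the minimizer of `t ↦ g_{ν,b'}(t) − bt + (ρ/2)t²` is `0` if `|b| ≤ ν`,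
`sign(b)(|b| − ν)/(ρ − 1/b')` if `ν < |b| ≤ b'νρ`, and `b/ρ` if `|b| > b'νρ`. -/
theorem mcp_firm_thresholding (ν ρ b b' : ℝ) (hν : 0 < ν) (hρ : 0 < ρ) (hb' : 1 / ρ < b')
    (g : ℝ → ℝ)
    (hg : g = fun t => if |t| ≤ b' * ν then ν * |t| - t ^ 2 / (2 * b') else b' * ν ^ 2 / 2)
    (f : ℝ → ℝ) (hf : f = fun t => g t - b * t + (ρ / 2) * t ^ 2)
    (tstar : ℝ)
    (ht : tstar = if |b| ≤ ν then 0
        else if |b| ≤ b' * ν * ρ then Real.sign b * (|b| - ν) / (ρ - 1 / b')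
        else b / ρ) :
    ∀ t, f tstar ≤ f t := by
  
  intro t
  simp only [hf, hg]
  rcases le_or_gt 0 b with hb | hb
  · have habsb : |b| = b := abs_of_nonneg hb
    have hts : tstar = if b ≤ ν then 0
        else if b ≤ b' * ν * ρ then (b - ν) / (ρ - 1 / b') else b / ρ := by
      rw [ht, habsb]
      by_cases h1 : b ≤ ν
      · rw [if_pos h1, if_pos h1]
      · rw [if_neg h1, if_neg h1]
        by_cases h2 : b ≤ b' * ν * ρ
        · rw [if_pos h2, if_pos h2, Real.sign_of_pos (by push_neg at h1; linarith), one_mul]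
        · rw [if_neg h2, if_neg h2]
    exact mcp_aux ν ρ b b' hν hρ hb' hb tstar hts t
  · have hb2 : 0 ≤ -b := by linarith
    have habsb : |b| = -b := abs_of_neg hb
    have h := mcp_aux ν ρ (-b) b' hν hρ hb' hb2
      (if -b ≤ ν then 0 else if -b ≤ b' * ν * ρ then (-b - ν) / (ρ - 1 / b') else -b / ρ)
      rfl (-t)
    have hts : tstar = -(if -b ≤ ν then (0:ℝ)
        else if -b ≤ b' * ν * ρ then (-b - ν) / (ρ - 1 / b') else -b / ρ) := by
      rw [ht, habsb]
      by_cases h1 : -b ≤ ν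
      · rw [if_pos h1, if_pos h1]; norm_num
      · rw [if_neg h1, if_neg h1]
        by_cases h2 : -b ≤ b' * ν * ρ
        · rw [if_pos h2, if_pos h2, Real.sign_of_neg hb]
          ring
        · rw [if_neg h2, if_neg h2]
          ring
    rw [hts]
    simp only [abs_neg, neg_sq, neg_mul, mul_neg, neg_neg, sub_neg_eq_add] at h ⊢
    linarith [h]
end
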